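/- Let n ≥ 2, let D ⊆ ℝ^{n−1} be a bounded open set, ℓ > 0, and Ω = D × (0,ℓ). Suppose u and v are C² on Ω̄, that f and g are continuous on Ω̄ with −Δu = f and −Δv = g at every point of Ω, that u_y(x,0) = u_y(x,ℓ) = v_y(x,0) = v_y(x,ℓ) = 0 for every x ∈ D, and that ∫₀^ℓ f(x,t) dt = ∫₀^ℓ g(x,t) dt for every x ∈ D. Then the function ψ : D → ℝ defined by ψ(x) = ∫₀^ℓ (u(x,t) − v(x,t)) dt is harmonic in D: ψ is twice continuously differentiable on D and Δψ(x) = 0 for every x ∈ D. -/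

import Mathlib

open MeasureTheory Set Bornology
open scoped Interval

set_option maxHeartbeats 1000000
set_option synthInstance.maxHeartbeats 400000
set_option maxSynthPendingDepth 3

noncomputable section

/-- Points of the cylinder `D × (0,ℓ)` are pairs `(x, y)` with `x ∈ ℝ^m`, `y ∈ ℝ`. -/
abbrev Cyl (m : ℕ) := EuclideanSpace ℝ (Fin m) × ℝ

/-- The Laplacian on the cylinder: sum of all second partial derivatives. -/
def cylLap {m : ℕ} (u : Cyl m → ℝ) (p : Cyl m) : ℝ :=
  (∑ i : Fin m, fderiv ℝ (fun q => fderiv ℝ u q (EuclideanSpace.single i 1, 0)) p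
      (EuclideanSpace.single i 1, 0)) +
    fderiv ℝ (fun q => fderiv ℝ u q ((0 : EuclideanSpace ℝ (Fin m)), (1 : ℝ))) p
      ((0 : EuclideanSpace ℝ (Fin m)), (1 : ℝ))

/-- The Laplacian on `ℝ^m`: sum of second partial derivatives. -/
def lapD {m : ℕ} (ψ : EuclideanSpace ℝ (Fin m) → ℝ) (x : EuclideanSpace ℝ (Fin m)) : ℝ :=
  ∑ i : Fin m, fderiv ℝ (fun y => fderiv ℝ ψ y (EuclideanSpace.single i 1)) x
    (EuclideanSpace.single i 1)

/-- `u` is C² on an open neighborhood of the closure of `A`. -/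
def IsC2OnClosure {Y : Type*} [NormedAddCommGroup Y] [NormedSpace ℝ Y]
    (u : Y → ℝ) (A : Set Y) : Prop :=
  ∃ U, IsOpen U ∧ closure A ⊆ U ∧ ContDiffOn ℝ 2 u U

namespace PsiAux

variable {m : ℕ}

local notation "H" => EuclideanSpace ℝ (Fin m)

/-- inclusion `x ↦ (x,0)` as a CLM -/
def inlH (m : ℕ) : EuclideanSpace ℝ (Fin m) →L[ℝ] Cyl m := ContinuousLinearMap.inl ℝ _ ℝ

/-- precomposition with `inlH` -/
def P (m : ℕ) : (Cyl m →L[ℝ] ℝ) →L[ℝ] (EuclideanSpace ℝ (Fin m) →L[ℝ] ℝ) :=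
  (ContinuousLinearMap.compL ℝ (EuclideanSpace ℝ (Fin m)) (Cyl m) ℝ).flip (inlH m)

def Q (m : ℕ) : (Cyl m →L[ℝ] (Cyl m →L[ℝ] ℝ)) →L[ℝ]
    (EuclideanSpace ℝ (Fin m) →L[ℝ] (EuclideanSpace ℝ (Fin m) →L[ℝ] ℝ)) :=
  (ContinuousLinearMap.compL ℝ (EuclideanSpace ℝ (Fin m)) (Cyl m →L[ℝ] ℝ)
      (EuclideanSpace ℝ (Fin m) →L[ℝ] ℝ) (P m)).comp
    ((ContinuousLinearMap.compL ℝ (EuclideanSpace ℝ (Fin m)) (Cyl m)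
      (Cyl m →L[ℝ] ℝ)).flip (inlH m))

lemma P_apply (A : Cyl m →L[ℝ] ℝ) : P m A = A.comp (inlH m) := rfl

lemma Q_apply (A : Cyl m →L[ℝ] (Cyl m →L[ℝ] ℝ)) :
    Q m A = (P m).comp (A.comp (inlH m)) := rfl

lemma P_apply' (A : Cyl m →L[ℝ] ℝ) (h : H) : P m A h = A (h, 0) := rfl

lemma Q_apply' (A : Cyl m →L[ℝ] (Cyl m →L[ℝ] ℝ)) (h k : H) :
    Q m A h k = A (h, 0) (k, 0) := rfl

end PsiAux

open PsiAux in
theorem aux {m : ℕ} {D : Set (EuclideanSpace ℝ (Fin m))} (hD : IsOpen D)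
    {ℓ : ℝ} (hℓ : 0 < ℓ) {U : Set (Cyl m)} (hU : IsOpen U)
    (hKU : ∀ x ∈ D, ∀ t ∈ Icc (0:ℝ) ℓ, ((x, t) : Cyl m) ∈ U)
    (w : Cyl m → ℝ) (hw : ContDiffOn ℝ 2 w U) :
    ContDiffOn ℝ 2 (fun x => ∫ t in (0:ℝ)..ℓ, w (x, t)) D ∧
    ∀ x ∈ D, lapD (fun x => ∫ t in (0:ℝ)..ℓ, w (x, t)) x =
      (∫ t in (0:ℝ)..ℓ, cylLap w (x, t))
        - (fderiv ℝ w (x, ℓ) ((0 : EuclideanSpace ℝ (Fin m)), (1:ℝ))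
            - fderiv ℝ w (x, 0) ((0 : EuclideanSpace ℝ (Fin m)), (1:ℝ))) := by
  set w' := fderiv ℝ w with hw'def
  set w'' := fderiv ℝ w' with hw''def
  have hcd1 : ContDiffOn ℝ 1 w' U := by
    have h := (contDiffOn_succ_iff_fderiv_of_isOpen hU
      (n := 1) (f := w)).mp (hw.of_le (by norm_num))
    exact h.2.2
  have hwdiff : DifferentiableOn ℝ w U := hw.differentiableOn (by norm_num)
  have hw'diff : DifferentiableOn ℝ w' U := hcd1.differentiableOn (by norm_num)
  have hw'cont : ContinuousOn w' U := hcd1.continuousOn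
  have hw''cont : ContinuousOn w'' U := hcd1.continuousOn_fderiv_of_isOpen hU (le_refl _)
  have hder : ∀ p ∈ U, HasFDerivAt w (w' p) p := fun p hp =>
    (hwdiff.differentiableAt (hU.mem_nhds hp)).hasFDerivAt
  have hder' : ∀ p ∈ U, HasFDerivAt w' (w'' p) p := fun p hp =>
    (hw'diff.differentiableAt (hU.mem_nhds hp)).hasFDerivAt
  -- identification of second partials
  have hcyl : ∀ p ∈ U, ∀ e e' : Cyl m,
      fderiv ℝ (fun q => fderiv ℝ w q e) p e' = w'' p e' e := by
    intro p hp e e'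
    have h1 : HasFDerivAt (fun q => fderiv ℝ w q e)
        ((ContinuousLinearMap.apply ℝ ℝ e).comp (w'' p)) p :=
      (ContinuousLinearMap.apply ℝ ℝ e).hasFDerivAt.comp p (hder' p hp)
    rw [h1.fderiv]; rfl
  have hcylLap : ∀ p ∈ U, cylLap w p =
      (∑ i : Fin m, w'' p (EuclideanSpace.single i 1, 0) (EuclideanSpace.single i 1, 0))
        + w'' p (0, 1) (0, 1) := by
    intro p hp
    unfold cylLap
    rw [hcyl p hp]
    congr 1
    exact Finset.sum_congr rfl fun i _ => hcyl p hp _ _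
  have happ : ∀ (e e' : Cyl m), ContinuousOn (fun p => w'' p e e') U := fun e e' =>
    (ContinuousLinearMap.apply ℝ ℝ e').continuous.comp_continuousOn
      ((ContinuousLinearMap.apply ℝ (Cyl m →L[ℝ] ℝ) e).continuous.comp_continuousOn hw''cont)
  have hcylcont : ContinuousOn (cylLap w) U := by
    exact ContinuousOn.congr
      ((continuousOn_finset_sum _ fun i _ => happ _ _).add (happ _ _)) hcylLap
  -- local ball structure
  have key : ∀ x₀ ∈ D, ∃ ε, 0 < ε ∧
      ∀ x ∈ Metric.closedBall x₀ ε, ∀ t ∈ Icc (0:ℝ) ℓ, ((x, t) : Cyl m) ∈ U := by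
    intro x₀ hx₀
    obtain ⟨V, W, hVo, _hWo, hxV, hIW, hVW⟩ :=
      generalized_tube_lemma isCompact_singleton isCompact_Icc hU
        (fun p hp => by
          obtain ⟨hp1, hp2⟩ := hp
          rw [mem_singleton_iff] at hp1
          have := hKU p.1 (hp1 ▸ hx₀) p.2 hp2
          simpa using this)
    obtain ⟨ε, hε, hball⟩ := Metric.nhds_basis_closedBall.mem_iff.mp
      (hVo.mem_nhds (hxV rfl))
    exact ⟨ε, hε, fun x hx t ht => hVW (Set.mk_mem_prod (hball hx) (hIW ht))⟩
  -- claim A : first derivative under the integral sign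
  have claimA : ∀ x₀ ∈ D, HasFDerivAt (fun x => ∫ t in (0:ℝ)..ℓ, w (x, t))
      (∫ t in (0:ℝ)..ℓ, P m (w' (x₀, t))) x₀ := by
    intro x₀ hx₀
    obtain ⟨ε, hε, hball⟩ := key x₀ hx₀
    have hmapIcc : ∀ x ∈ Metric.closedBall x₀ ε,
        ∀ t ∈ Icc (0:ℝ) ℓ, ((x, t) : Cyl m) ∈ U := hball
    have hsl : ∀ {G : Type} [NormedAddCommGroup G] (z : Cyl m → G), ContinuousOn z U →
        ∀ x ∈ Metric.closedBall x₀ ε, ContinuousOn (fun t => z (x, t)) (Icc (0:ℝ) ℓ) := by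
      intro G _ z hz x hx
      exact hz.comp ((continuous_const.prodMk continuous_id).continuousOn)
        (fun t ht => hmapIcc x hx t ht)
    have hms : ∀ {G : Type} [NormedAddCommGroup G] (z : Cyl m → G), ContinuousOn z U →
        ∀ x ∈ Metric.closedBall x₀ ε, AEStronglyMeasurable (fun t => z (x, t))
          (volume.restrict (Ι (0:ℝ) ℓ)) := by
      intro G _ z hz x hx
      rw [uIoc_of_le hℓ.le]
      exact ((hsl z hz x hx).mono Ioc_subset_Icc_self).aestronglyMeasurable measurableSet_Ioc
    obtain ⟨C, hC⟩ := (((isCompact_closedBall x₀ ε).prod isCompact_Icc)).exists_bound_of_continuousOn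
      (hw'cont.mono (fun p hp => by
        have := hmapIcc p.1 hp.1 p.2 hp.2; simpa using this))
    apply intervalIntegral.hasFDerivAt_integral_of_dominated_of_fderiv_le
      (F := fun x t => w (x, t)) (F' := fun x t => P m (w' (x, t)))
      (μ := volume) (a := 0) (b := ℓ) (x₀ := x₀)
      (s := Metric.ball x₀ ε) (hs := Metric.ball_mem_nhds x₀ hε) (bound := fun _ => ‖P m‖ * C)
    · filter_upwards [Metric.closedBall_mem_nhds x₀ hε] with x hx
      exact hms w hw.continuousOn x hx
    · exact ((hsl w hw.continuousOn x₀ (Metric.mem_closedBall_self hε.le)).mono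
        (by rw [uIcc_of_le hℓ.le])).intervalIntegrable
    · exact hms (fun p => P m (w' p)) ((P m).continuous.comp_continuousOn hw'cont) x₀
        (Metric.mem_closedBall_self hε.le)
    · refine Filter.Eventually.of_forall fun t ht x hx => ?_
      rw [uIoc_of_le hℓ.le] at ht
      calc ‖P m (w' (x, t))‖ ≤ ‖P m‖ * ‖w' (x, t)‖ := (P m).le_opNorm _
      _ ≤ ‖P m‖ * C := by
          have h0 : (0:ℝ) ≤ ‖P m‖ := ContinuousLinearMap.opNorm_nonneg _
          have hb := hC (x, t) (Set.mk_mem_prod (Metric.ball_subset_closedBall hx)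
            (Ioc_subset_Icc_self ht))
          exact mul_le_mul_of_nonneg_left hb h0
    · exact intervalIntegrable_const
    · refine Filter.Eventually.of_forall fun t ht x hx => ?_
      rw [uIoc_of_le hℓ.le] at ht
      have hp := hder (x, t) (hmapIcc x (Metric.ball_subset_closedBall hx) t
        (Ioc_subset_Icc_self ht))
      exact hp.comp x (hasFDerivAt_prodMk_left x t)
  -- claim B : second derivative under the integral sign
  have claimB : ∀ x₀ ∈ D, HasFDerivAt (fun x => ∫ t in (0:ℝ)..ℓ, P m (w' (x, t)))
      (∫ t in (0:ℝ)..ℓ, Q m (w'' (x₀, t))) x₀ := by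
    intro x₀ hx₀
    obtain ⟨ε, hε, hball⟩ := key x₀ hx₀
    have hmapIcc : ∀ x ∈ Metric.closedBall x₀ ε,
        ∀ t ∈ Icc (0:ℝ) ℓ, ((x, t) : Cyl m) ∈ U := hball
    have hsl : ∀ {G : Type} [NormedAddCommGroup G] (z : Cyl m → G), ContinuousOn z U →
        ∀ x ∈ Metric.closedBall x₀ ε, ContinuousOn (fun t => z (x, t)) (Icc (0:ℝ) ℓ) := by
      intro G _ z hz x hx
      exact hz.comp ((continuous_const.prodMk continuous_id).continuousOn)
        (fun t ht => hmapIcc x hx t ht)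
    have hms : ∀ {G : Type} [NormedAddCommGroup G] (z : Cyl m → G), ContinuousOn z U →
        ∀ x ∈ Metric.closedBall x₀ ε, AEStronglyMeasurable (fun t => z (x, t))
          (volume.restrict (Ι (0:ℝ) ℓ)) := by
      intro G _ z hz x hx
      rw [uIoc_of_le hℓ.le]
      exact ((hsl z hz x hx).mono Ioc_subset_Icc_self).aestronglyMeasurable measurableSet_Ioc
    obtain ⟨C, hC⟩ := (((isCompact_closedBall x₀ ε).prod isCompact_Icc)).exists_bound_of_continuousOn
      (hw''cont.mono (fun p hp => by
        have := hmapIcc p.1 hp.1 p.2 hp.2; simpa using this))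
    apply intervalIntegral.hasFDerivAt_integral_of_dominated_of_fderiv_le
      (F := fun x t => P m (w' (x, t))) (F' := fun x t => Q m (w'' (x, t)))
      (μ := volume) (a := 0) (b := ℓ) (x₀ := x₀)
      (s := Metric.ball x₀ ε) (hs := Metric.ball_mem_nhds x₀ hε) (bound := fun _ => ‖Q m‖ * C)
    · filter_upwards [Metric.closedBall_mem_nhds x₀ hε] with x hx
      exact hms (fun p => P m (w' p)) ((P m).continuous.comp_continuousOn hw'cont) x hx
    · exact ((hsl (fun p => P m (w' p)) ((P m).continuous.comp_continuousOn hw'cont) x₀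
        (Metric.mem_closedBall_self hε.le)).mono
        (by rw [uIcc_of_le hℓ.le])).intervalIntegrable
    · exact hms (fun p => Q m (w'' p)) ((Q m).continuous.comp_continuousOn hw''cont) x₀
        (Metric.mem_closedBall_self hε.le)
    · refine Filter.Eventually.of_forall fun t ht x hx => ?_
      rw [uIoc_of_le hℓ.le] at ht
      calc ‖Q m (w'' (x, t))‖ ≤ ‖Q m‖ * ‖w'' (x, t)‖ := (Q m).le_opNorm _
      _ ≤ ‖Q m‖ * C := by
          have h0 : (0:ℝ) ≤ ‖Q m‖ := ContinuousLinearMap.opNorm_nonneg _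
          have hb := hC (x, t) (Set.mk_mem_prod (Metric.ball_subset_closedBall hx)
            (Ioc_subset_Icc_self ht))
          exact mul_le_mul_of_nonneg_left hb h0
    · exact intervalIntegrable_const
    · refine Filter.Eventually.of_forall fun t ht x hx => ?_
      rw [uIoc_of_le hℓ.le] at ht
      have hp := (hder' (x, t) (hmapIcc x (Metric.ball_subset_closedBall hx) t
        (Ioc_subset_Icc_self ht))).comp x (hasFDerivAt_prodMk_left (𝕜 := ℝ) x t)
      exact (P m).hasFDerivAt.comp x hp
  -- claim C : continuity of the second-derivative integral
  have claimC : ContinuousOn (fun x => ∫ t in (0:ℝ)..ℓ, Q m (w'' (x, t))) D := by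
    intro x₀ hx₀
    obtain ⟨ε, hε, hball⟩ := key x₀ hx₀
    obtain ⟨C, hC⟩ := (((isCompact_closedBall x₀ ε).prod isCompact_Icc)).exists_bound_of_continuousOn
      (hw''cont.mono (fun p hp => by
        have := hball p.1 hp.1 p.2 hp.2; simpa using this))
    refine ContinuousAt.continuousWithinAt ?_
    apply intervalIntegral.continuousAt_of_dominated_interval
      (F := fun x t => Q m (w'' (x, t))) (bound := fun _ => ‖Q m‖ * C)
      (μ := volume) (a := 0) (b := ℓ) (x₀ := x₀)
    · filter_upwards [Metric.closedBall_mem_nhds x₀ hε] with x hx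
      rw [uIoc_of_le hℓ.le]
      refine (ContinuousOn.aestronglyMeasurable ?_ measurableSet_Ioc)
      refine ((Q m).continuous.comp_continuousOn
        (hw''cont.comp ((continuous_const.prodMk continuous_id).continuousOn)
          (fun t ht => hball x hx t (Ioc_subset_Icc_self ht))))
    · filter_upwards [Metric.closedBall_mem_nhds x₀ hε] with x hx
      refine Filter.Eventually.of_forall fun t ht => ?_
      rw [uIoc_of_le hℓ.le] at ht
      calc ‖Q m (w'' (x, t))‖ ≤ ‖Q m‖ * ‖w'' (x, t)‖ := (Q m).le_opNorm _
      _ ≤ ‖Q m‖ * C := by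
          have h0 : (0:ℝ) ≤ ‖Q m‖ := ContinuousLinearMap.opNorm_nonneg _
          exact mul_le_mul_of_nonneg_left
            (hC (x, t) (Set.mk_mem_prod hx (Ioc_subset_Icc_self ht))) h0
    · exact intervalIntegrable_const
    · refine Filter.Eventually.of_forall fun t ht => ?_
      rw [uIoc_of_le hℓ.le] at ht
      have hU' : ((x₀, t) : Cyl m) ∈ U :=
        hball x₀ (Metric.mem_closedBall_self hε.le) t (Ioc_subset_Icc_self ht)
      have h1 : ContinuousAt w'' (x₀, t) := hw''cont.continuousAt (hU.mem_nhds hU')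
      have hcurve : ContinuousAt (fun x : EuclideanSpace ℝ (Fin m) => ((x, t) : Cyl m)) x₀ :=
        (continuous_id.prodMk continuous_const).continuousAt
      have h2 : ContinuousAt (fun x : EuclideanSpace ℝ (Fin m) => w'' (x, t)) x₀ :=
        ContinuousAt.comp (f := fun x : EuclideanSpace ℝ (Fin m) => ((x, t) : Cyl m)) h1 hcurve
      exact (Q m).continuous.continuousAt.comp h2
  -- the fderiv of ψ equals the parametric integral of the first derivative on D
  have hfd : Set.EqOn (fderiv ℝ (fun x => ∫ t in (0:ℝ)..ℓ, w (x, t)))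
      (fun x => ∫ t in (0:ℝ)..ℓ, P m (w' (x, t))) D := fun x hx => (claimA x hx).fderiv
  -- C² smoothness of ψ
  have hpart1 : ContDiffOn ℝ 2 (fun x => ∫ t in (0:ℝ)..ℓ, w (x, t)) D := by
    rw [show (2 : WithTop ℕ∞) = 1 + 1 by norm_num,
      contDiffOn_succ_iff_fderiv_of_isOpen hD]
    refine ⟨fun x hx => (claimA x hx).differentiableAt.differentiableWithinAt, by simp, ?_⟩
    have h1 : ContDiffOn ℝ 1 (fun x => ∫ t in (0:ℝ)..ℓ, P m (w' (x, t))) D := by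
      rw [show (1 : WithTop ℕ∞) = 0 + 1 by norm_num,
        contDiffOn_succ_iff_fderiv_of_isOpen hD]
      refine ⟨fun x hx => (claimB x hx).differentiableAt.differentiableWithinAt, by simp, ?_⟩
      rw [contDiffOn_zero]
      exact claimC.congr fun x hx => (claimB x hx).fderiv
    exact h1.congr hfd
  refine ⟨hpart1, fun x hx => ?_⟩
  have hIccU : ∀ t ∈ Icc (0:ℝ) ℓ, ((x, t) : Cyl m) ∈ U := hKU x hx
  have hslice : ∀ {G : Type} [NormedAddCommGroup G] (z : Cyl m → G), ContinuousOn z U →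
      ContinuousOn (fun t => z (x, t)) (Icc (0:ℝ) ℓ) := by
    intro G _ z hz
    exact hz.comp ((continuous_const.prodMk continuous_id).continuousOn)
      (fun t ht => hIccU t ht)
  have happint : ∀ e e' : Cyl m,
      IntervalIntegrable (fun t => w'' (x, t) e e') volume 0 ℓ := fun e e' =>
    ContinuousOn.intervalIntegrable_of_Icc hℓ.le (hslice _ (happ e e'))
  have hQint : IntervalIntegrable (fun t => Q m (w'' (x, t))) volume 0 ℓ :=
    ContinuousOn.intervalIntegrable_of_Icc hℓ.le
      ((Q m).continuous.comp_continuousOn (hslice w'' hw''cont))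
  have hQeint : ∀ e : EuclideanSpace ℝ (Fin m),
      IntervalIntegrable (fun t => Q m (w'' (x, t)) e) volume 0 ℓ := fun e =>
    ContinuousOn.intervalIntegrable_of_Icc hℓ.le
      ((ContinuousLinearMap.apply ℝ _ e).continuous.comp_continuousOn
        ((Q m).continuous.comp_continuousOn (hslice w'' hw''cont)))
  have hcylint : IntervalIntegrable (fun t => cylLap w (x, t)) volume 0 ℓ :=
    ContinuousOn.intervalIntegrable_of_Icc hℓ.le (hslice _ hcylcont)
  have hfd2 : ∀ i : Fin m,
      fderiv ℝ (fun y => fderiv ℝ (fun x' => ∫ t in (0:ℝ)..ℓ, w (x', t)) y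
          (EuclideanSpace.single i 1)) x (EuclideanSpace.single i 1)
        = ∫ t in (0:ℝ)..ℓ, w'' (x, t) (EuclideanSpace.single i 1, 0)
            (EuclideanSpace.single i 1, 0) := by
    intro i
    have hev : (fun y => fderiv ℝ (fun x' => ∫ t in (0:ℝ)..ℓ, w (x', t)) y
        (EuclideanSpace.single i 1))
        =ᶠ[nhds x] (fun y => (∫ t in (0:ℝ)..ℓ, P m (w' (y, t))) (EuclideanSpace.single i 1)) :=
      Filter.eventuallyEq_of_mem (hD.mem_nhds hx) fun y hy => by rw [hfd hy]
    rw [hev.fderiv_eq]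
    have h2 : HasFDerivAt
        (fun y => (∫ t in (0:ℝ)..ℓ, P m (w' (y, t))) (EuclideanSpace.single i 1))
        ((ContinuousLinearMap.apply ℝ ℝ
            ((EuclideanSpace.single i 1 : EuclideanSpace ℝ (Fin m)))).comp
          (∫ t in (0:ℝ)..ℓ, Q m (w'' (x, t)))) x :=
      HasFDerivAt.comp (𝕜 := ℝ) x (ContinuousLinearMap.hasFDerivAt
        (ContinuousLinearMap.apply ℝ ℝ
          (EuclideanSpace.single i 1 : EuclideanSpace ℝ (Fin m)))) (claimB x hx)
    rw [h2.fderiv]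
    show (∫ t in (0:ℝ)..ℓ, Q m (w'' (x, t))) (EuclideanSpace.single i 1)
        (EuclideanSpace.single i 1) = _
    rw [ContinuousLinearMap.intervalIntegral_apply hQint,
      ContinuousLinearMap.intervalIntegral_apply (hQeint _)]
    rfl
  have hFTC : (∫ t in (0:ℝ)..ℓ, w'' (x, t) ((0 : EuclideanSpace ℝ (Fin m)), (1:ℝ))
      ((0 : EuclideanSpace ℝ (Fin m)), (1:ℝ)))
      = w' (x, ℓ) ((0 : EuclideanSpace ℝ (Fin m)), (1:ℝ))
        - w' (x, 0) ((0 : EuclideanSpace ℝ (Fin m)), (1:ℝ)) := by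
    refine intervalIntegral.integral_eq_sub_of_hasDerivAt
      (f := fun t : ℝ => w' (x, t) ((0 : EuclideanSpace ℝ (Fin m)), (1:ℝ)))
      (fun t ht => ?_) (happint _ _)
    rw [uIcc_of_le hℓ.le] at ht
    have hcurve : HasDerivAt (fun t : ℝ => ((x, t) : Cyl m))
        ((0 : EuclideanSpace ℝ (Fin m)), (1:ℝ)) t :=
      (hasDerivAt_const t x).prodMk (hasDerivAt_id t)
    have h1 : HasDerivAt (fun t : ℝ => w' (x, t))
        (w'' (x, t) ((0 : EuclideanSpace ℝ (Fin m)), (1:ℝ))) t :=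
      (hder' (x, t) (hIccU t ht)).comp_hasDerivAt t hcurve
    exact (ContinuousLinearMap.apply ℝ ℝ
      ((0 : EuclideanSpace ℝ (Fin m)), (1:ℝ))).hasFDerivAt.comp_hasDerivAt t h1
  unfold lapD
  rw [Finset.sum_congr rfl fun i _ => hfd2 i,
    ← intervalIntegral.integral_finset_sum (fun i _ => happint _ _)]
  have hEq : Set.EqOn
      (fun t => ∑ i : Fin m, w'' (x, t) (EuclideanSpace.single i 1, 0)
        (EuclideanSpace.single i 1, 0))
      (fun t => cylLap w (x, t) - w'' (x, t) ((0 : EuclideanSpace ℝ (Fin m)), (1:ℝ))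
        ((0 : EuclideanSpace ℝ (Fin m)), (1:ℝ))) (uIcc (0:ℝ) ℓ) := by
    intro t ht
    rw [uIcc_of_le hℓ.le] at ht
    have h3 := hcylLap (x, t) (hIccU t ht)
    simp only
    linarith [h3]
  rw [intervalIntegral.integral_congr hEq,
    intervalIntegral.integral_sub hcylint (happint _ _), hFTC]

lemma cylLap_sub {m : ℕ} {V : Set (Cyl m)} (hV : IsOpen V) {u v : Cyl m → ℝ}
    (hu : ContDiffOn ℝ 2 u V) (hv : ContDiffOn ℝ 2 v V) {p : Cyl m} (hp : p ∈ V) :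
    cylLap (fun q => u q - v q) p = cylLap u p - cylLap v p := by
  have hud : DifferentiableOn ℝ u V := hu.differentiableOn (by norm_num)
  have hvd : DifferentiableOn ℝ v V := hv.differentiableOn (by norm_num)
  have hu1 : ContDiffOn ℝ 1 (fderiv ℝ u) V :=
    ((contDiffOn_succ_iff_fderiv_of_isOpen hV).mp (hu.of_le (by norm_num))).2.2
  have hv1 : ContDiffOn ℝ 1 (fderiv ℝ v) V :=
    ((contDiffOn_succ_iff_fderiv_of_isOpen hV).mp (hv.of_le (by norm_num))).2.2
  have key : ∀ e e' : Cyl m,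
      fderiv ℝ (fun q => fderiv ℝ (fun q' => u q' - v q') q e) p e'
        = fderiv ℝ (fun q => fderiv ℝ u q e) p e'
          - fderiv ℝ (fun q => fderiv ℝ v q e) p e' := by
    intro e e'
    have hev : (fun q => fderiv ℝ (fun q' => u q' - v q') q e)
        =ᶠ[nhds p] (fun q => fderiv ℝ u q e - fderiv ℝ v q e) := by
      filter_upwards [hV.mem_nhds hp] with q hq
      rw [fderiv_fun_sub (hud.differentiableAt (hV.mem_nhds hq))
        (hvd.differentiableAt (hV.mem_nhds hq))]
      rfl
    rw [hev.fderiv_eq]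
    have hdu : DifferentiableAt ℝ (fun q => fderiv ℝ u q e) p :=
      (HasFDerivAt.comp (𝕜 := ℝ) p (ContinuousLinearMap.hasFDerivAt
        (ContinuousLinearMap.apply ℝ ℝ e))
        ((hu1.differentiableOn (by norm_num)).differentiableAt
          (hV.mem_nhds hp)).hasFDerivAt).differentiableAt
    have hdv : DifferentiableAt ℝ (fun q => fderiv ℝ v q e) p :=
      (HasFDerivAt.comp (𝕜 := ℝ) p (ContinuousLinearMap.hasFDerivAt
        (ContinuousLinearMap.apply ℝ ℝ e))
        ((hv1.differentiableOn (by norm_num)).differentiableAt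
          (hV.mem_nhds hp)).hasFDerivAt).differentiableAt
    rw [fderiv_fun_sub hdu hdv]
    rfl
  unfold cylLap
  rw [key, Finset.sum_congr rfl fun i _ => key _ _, Finset.sum_sub_distrib]
  ring

/-- If `-Δu = f`, `-Δv = g` on the cylinder with Neumann conditions on top and bottom and
`f`, `g` have equal means on every segment `{x} × (0,ℓ)`, then
`ψ(x) = ∫₀^ℓ (u(x,t) - v(x,t)) dt` is harmonic in `D`. -/
theorem psi_harmonic_cylinder {n : ℕ} (hn : 2 ≤ n)
    (D : Set (EuclideanSpace ℝ (Fin (n - 1)))) (hD : IsOpen D) (hDb : IsBounded D)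
    {ℓ : ℝ} (hℓ : 0 < ℓ) (u v f g : Cyl (n - 1) → ℝ)
    (hu : IsC2OnClosure u (D ×ˢ Ioo (0 : ℝ) ℓ)) (hv : IsC2OnClosure v (D ×ˢ Ioo (0 : ℝ) ℓ))
    (hf : ContinuousOn f (closure (D ×ˢ Ioo (0 : ℝ) ℓ)))
    (hg : ContinuousOn g (closure (D ×ˢ Ioo (0 : ℝ) ℓ)))
    (hupde : ∀ p ∈ D ×ˢ Ioo (0 : ℝ) ℓ, -cylLap u p = f p)
    (hvpde : ∀ p ∈ D ×ˢ Ioo (0 : ℝ) ℓ, -cylLap v p = g p)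
    (huy0 : ∀ x ∈ D,
      fderiv ℝ u (x, (0 : ℝ)) ((0 : EuclideanSpace ℝ (Fin (n - 1))), (1 : ℝ)) = 0)
    (huyℓ : ∀ x ∈ D,
      fderiv ℝ u (x, ℓ) ((0 : EuclideanSpace ℝ (Fin (n - 1))), (1 : ℝ)) = 0)
    (hvy0 : ∀ x ∈ D,
      fderiv ℝ v (x, (0 : ℝ)) ((0 : EuclideanSpace ℝ (Fin (n - 1))), (1 : ℝ)) = 0)
    (hvyℓ : ∀ x ∈ D,
      fderiv ℝ v (x, ℓ) ((0 : EuclideanSpace ℝ (Fin (n - 1))), (1 : ℝ)) = 0)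
    (hfg : ∀ x ∈ D, (∫ t in (0 : ℝ)..ℓ, f (x, t)) = ∫ t in (0 : ℝ)..ℓ, g (x, t)) :
    ContDiffOn ℝ 2
        (fun x : EuclideanSpace ℝ (Fin (n - 1)) => ∫ t in (0 : ℝ)..ℓ, (u (x, t) - v (x, t))) D ∧
      ∀ x ∈ D,
        lapD (fun y : EuclideanSpace ℝ (Fin (n - 1)) =>
          ∫ t in (0 : ℝ)..ℓ, (u (y, t) - v (y, t))) x = 0 := by
  obtain ⟨Uu, hUu, hclu, huC⟩ := hu
  obtain ⟨Uv, hUv, hclv, hvC⟩ := hv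
  have hVopen : IsOpen (Uu ∩ Uv) := hUu.inter hUv
  have hcl : closure (D ×ˢ Ioo (0:ℝ) ℓ) ⊆ Uu ∩ Uv := subset_inter hclu hclv
  have hclmem : ∀ x ∈ D, ∀ t ∈ Icc (0:ℝ) ℓ,
      ((x, t) : Cyl (n-1)) ∈ closure (D ×ˢ Ioo (0:ℝ) ℓ) := by
    intro x hx t ht
    rw [closure_prod_eq, closure_Ioo hℓ.ne]
    exact Set.mk_mem_prod (subset_closure hx) ht
  have huC2 : ContDiffOn ℝ 2 u (Uu ∩ Uv) := huC.mono inter_subset_left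
  have hvC2 : ContDiffOn ℝ 2 v (Uu ∩ Uv) := hvC.mono inter_subset_right
  have hwC : ContDiffOn ℝ 2 (fun p : Cyl (n-1) => u p - v p) (Uu ∩ Uv) := huC2.sub hvC2
  have haux := aux hD hℓ hVopen (fun x hx t ht => hcl (hclmem x hx t ht)) _ hwC
  refine ⟨haux.1, fun x hx => ?_⟩
  have hudiff : ∀ p ∈ Uu ∩ Uv, DifferentiableAt ℝ u p := fun p hp =>
    (huC2.differentiableOn (by norm_num)).differentiableAt (hVopen.mem_nhds hp)
  have hvdiff : ∀ p ∈ Uu ∩ Uv, DifferentiableAt ℝ v p := fun p hp =>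
    (hvC2.differentiableOn (by norm_num)).differentiableAt (hVopen.mem_nhds hp)
  have hsub0 : ((x, (0:ℝ)) : Cyl (n-1)) ∈ Uu ∩ Uv :=
    hcl (hclmem x hx 0 ⟨le_refl _, hℓ.le⟩)
  have hsubl : ((x, ℓ) : Cyl (n-1)) ∈ Uu ∩ Uv :=
    hcl (hclmem x hx ℓ ⟨hℓ.le, le_refl _⟩)
  have hN0 : fderiv ℝ (fun p : Cyl (n-1) => u p - v p) (x, (0:ℝ))
      ((0 : EuclideanSpace ℝ (Fin (n-1))), (1:ℝ)) = 0 := by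
    rw [fderiv_fun_sub (hudiff _ hsub0) (hvdiff _ hsub0)]
    simp [huy0 x hx, hvy0 x hx]
  have hNl : fderiv ℝ (fun p : Cyl (n-1) => u p - v p) (x, ℓ)
      ((0 : EuclideanSpace ℝ (Fin (n-1))), (1:ℝ)) = 0 := by
    rw [fderiv_fun_sub (hudiff _ hsubl) (hvdiff _ hsubl)]
    simp [huyℓ x hx, hvyℓ x hx]
  have hae : ∀ᵐ t : ℝ, t ∈ Ι (0:ℝ) ℓ →
      cylLap (fun p : Cyl (n-1) => u p - v p) (x, t) = g (x, t) - f (x, t) := by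
    have hne : ∀ᵐ t : ℝ, t ≠ ℓ := by
      refine ae_iff.mpr ?_
      simpa [not_not] using Real.volume_singleton (a := ℓ)
    filter_upwards [hne] with t htne ht
    rw [uIoc_of_le hℓ.le] at ht
    have htIoo : t ∈ Ioo (0:ℝ) ℓ := ⟨ht.1, lt_of_le_of_ne ht.2 htne⟩
    have hpΩ : ((x, t) : Cyl (n-1)) ∈ D ×ˢ Ioo (0:ℝ) ℓ := Set.mk_mem_prod hx htIoo
    rw [cylLap_sub hVopen huC2 hvC2 (hcl (subset_closure hpΩ))]
    have h1 := hupde _ hpΩ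
    have h2 := hvpde _ hpΩ
    linarith
  have hfint : IntervalIntegrable (fun t => f (x, t)) volume 0 ℓ :=
    ContinuousOn.intervalIntegrable_of_Icc hℓ.le
      (hf.comp ((continuous_const.prodMk continuous_id).continuousOn)
        (fun t ht => hclmem x hx t ht))
  have hgint : IntervalIntegrable (fun t => g (x, t)) volume 0 ℓ :=
    ContinuousOn.intervalIntegrable_of_Icc hℓ.le
      (hg.comp ((continuous_const.prodMk continuous_id).continuousOn)
        (fun t ht => hclmem x hx t ht))
  have hmain := haux.2 x hx
  have hgoal : lapD (fun y : EuclideanSpace ℝ (Fin (n-1)) =>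
      ∫ t in (0:ℝ)..ℓ, ((fun p : Cyl (n-1) => u p - v p) (y, t))) x = 0 := by
    rw [hmain, intervalIntegral.integral_congr_ae hae,
      intervalIntegral.integral_sub hgint hfint, hN0, hNl]
    have := hfg x hx
    linarith
  exact hgoal
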